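/- Let H = D − L − Lᵀ be a symmetric n×n block matrix where D = diag(D₁,…,D_q) is block diagonal and L is strictly lower block triangular, and let T = diag(T₁,…,T_q) be symmetric positive definite block diagonal. Define Gᵢ = I − Pᵢ T H where Pᵢ = diag(0,…,0,I_i,0,…,0) selects the i-th block. Then G_q G_{q−1} ⋯ G₁ = (T⁻¹ − L)⁻¹ (T⁻¹ − D + Lᵀ). -/

import Mathlib

open Matrix

namespace Stmt8Aux

variable {n q : ℕ}

def Pm (blk : Fin n → Fin q) (i : Fin q) : Matrix (Fin n) (Fin n) ℝ :=
  Matrix.diagonal fun j => if blk j = i then (1 : ℝ) else 0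

lemma Pm_sum (blk : Fin n → Fin q) : ∑ i, Pm blk i = 1 := by
  ext a b
  by_cases h : a = b <;>
    simp [Pm, Matrix.sum_apply, Matrix.diagonal_apply, Matrix.one_apply, h]

lemma Pm_mul_self (blk : Fin n → Fin q) (i : Fin q) : Pm blk i * Pm blk i = Pm blk i := by
  ext a b
  simp only [Pm, Matrix.diagonal_mul_diagonal, Matrix.diagonal_apply]
  split_ifs <;> simp_all

lemma Pm_mul_ne (blk : Fin n → Fin q) {i j : Fin q} (h : i ≠ j) :
    Pm blk i * Pm blk j = 0 := by
  ext a b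
  simp only [Pm, Matrix.diagonal_mul_diagonal, Matrix.diagonal_apply, Matrix.zero_apply]
  split_ifs with h1 h2 h3 <;>
    first
      | rfl
      | simp_all
      | exact absurd (h2.symm.trans h3) h

lemma PAP (blk : Fin n → Fin q) (A : Matrix (Fin n) (Fin n) ℝ) (i j : Fin q)
    (h : ∀ a b, blk a = i → blk b = j → A a b = 0) :
    Pm blk i * A * Pm blk j = 0 := by
  ext a b
  rw [Pm, Pm, Matrix.mul_diagonal, Matrix.diagonal_mul]
  by_cases h1 : blk a = i
  · by_cases h2 : blk b = j
    · simp [h1, h2, h a b h1 h2]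
    · simp [h2]
  · simp [h1]

lemma Pm_comm (blk : Fin n → Fin q) (T : Matrix (Fin n) (Fin n) ℝ)
    (hTblk : ∀ j k, blk j ≠ blk k → T j k = 0) (i : Fin q) :
    Pm blk i * T = T * Pm blk i := by
  ext a b
  rw [Pm, Matrix.mul_diagonal, Matrix.diagonal_mul]
  by_cases h1 : blk a = i <;> by_cases h2 : blk b = i <;>
    simp [h1, h2]
  · exact hTblk a b (by rw [h1]; exact fun hh => h2 hh.symm)
  · exact (hTblk a b (by rw [h2]; exact fun hh => h1 hh)).symm

end Stmt8Aux

namespace Stmt8Aux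

noncomputable def Gn (G : Fin q → Matrix (Fin n) (Fin n) ℝ) (m : ℕ) :
    Matrix (Fin n) (Fin n) ℝ :=
  if h : m < q then G ⟨m, h⟩ else 1

noncomputable def M (G : Fin q → Matrix (Fin n) (Fin n) ℝ) (k : ℕ) :
    Matrix (Fin n) (Fin n) ℝ :=
  (((List.range k).map (Gn G)).reverse).prod

lemma M_zero (G : Fin q → Matrix (Fin n) (Fin n) ℝ) : M G 0 = 1 := by
  simp [M]

lemma M_succ (G : Fin q → Matrix (Fin n) (Fin n) ℝ) (k : ℕ) :
    M G (k + 1) = Gn G k * M G k := by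
  simp [M, List.range_succ]

lemma M_top (G : Fin q → Matrix (Fin n) (Fin n) ℝ) :
    (List.ofFn G).reverse.prod = M G q := by
  have : List.ofFn G = (List.range q).map (Gn G) := by
    apply List.ext_getElem
    · simp
    · intro i h1 h2
      simp at h1
      simp [Gn, h1]
  rw [M, this]

end Stmt8Aux

namespace Stmt8Aux

lemma TL_pow (blk : Fin n → Fin q) (T L : Matrix (Fin n) (Fin n) ℝ)
    (hTblk : ∀ j k, blk j ≠ blk k → T j k = 0)
    (hLlow : ∀ j k, ¬ blk k < blk j → L j k = 0) :
    ∀ m (j k : Fin n), ((T * L) ^ m) j k ≠ 0 → (blk k : ℕ) + m ≤ (blk j : ℕ) := by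
  intro m
  induction m with
  | zero =>
    intro j k h
    simp only [pow_zero] at h
    have : j = k := by
      by_contra hne
      exact h (Matrix.one_apply_ne hne)
    subst this; omega
  | succ m ih =>
    intro j k h
    rw [pow_succ, Matrix.mul_apply] at h
    obtain ⟨x, -, hx⟩ := Finset.exists_ne_zero_of_sum_ne_zero h
    have h1 : ((T * L) ^ m) j x ≠ 0 := fun hz => hx (by rw [hz, zero_mul])
    have h2 : (T * L) x k ≠ 0 := fun hz => hx (by rw [hz, mul_zero])
    rw [Matrix.mul_apply] at h2
    obtain ⟨y, -, hy⟩ := Finset.exists_ne_zero_of_sum_ne_zero h2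
    have hT' : T x y ≠ 0 := fun hz => hy (by rw [hz, zero_mul])
    have hL' : L y k ≠ 0 := fun hz => hy (by rw [hz, mul_zero])
    have e1 : blk x = blk y := by by_contra hc; exact hT' (hTblk x y hc)
    have e2 : (blk k : ℕ) < (blk y : ℕ) := by
      by_contra hc
      exact hL' (hLlow y k (by omega))
    have e3 : (blk x : ℕ) = (blk y : ℕ) := congrArg Fin.val e1
    have := ih j x h1
    omega

lemma TL_nilpotent (blk : Fin n → Fin q) (T L : Matrix (Fin n) (Fin n) ℝ)
    (hTblk : ∀ j k, blk j ≠ blk k → T j k = 0)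
    (hLlow : ∀ j k, ¬ blk k < blk j → L j k = 0) :
    (T * L) ^ q = 0 := by
  ext j k
  by_contra h
  have := TL_pow blk T L hTblk hLlow q j k h
  have := (blk j).isLt
  omega

end Stmt8Aux

open Stmt8Aux

theorem stmt8 {n q : ℕ} (blk : Fin n → Fin q)
    (H D L T : Matrix (Fin n) (Fin n) ℝ)
    (hHsymm : H.IsSymm)
    (hdecomp : H = D - L - Lᵀ)
    (hDblk : ∀ j k, blk j ≠ blk k → D j k = 0)
    (hLlow : ∀ j k, ¬ blk k < blk j → L j k = 0)
    (hT : T.PosDef)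
    (hTblk : ∀ j k, blk j ≠ blk k → T j k = 0) :
    let P : Fin q → Matrix (Fin n) (Fin n) ℝ := fun i =>
      Matrix.diagonal fun j => if blk j = i then (1 : ℝ) else 0
    let G : Fin q → Matrix (Fin n) (Fin n) ℝ := fun i => 1 - P i * T * H
    (List.ofFn G).reverse.prod = (T⁻¹ - L)⁻¹ * (T⁻¹ - D + Lᵀ) := by
  intro P G
  have hPeq : ∀ i, P i = Pm blk i := fun i => rfl
  have hGeq : ∀ i, G i = 1 - Pm blk i * T * H := fun i => rfl
  -- invertibility of T
  have hTdet : IsUnit T.det := isUnit_iff_ne_zero.mpr hT.det_pos.ne'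
  have hTiT : T⁻¹ * T = 1 := Matrix.nonsing_inv_mul T hTdet
  have hTTi : T * T⁻¹ = 1 := Matrix.mul_nonsing_inv T hTdet
  -- P commutes with T and T⁻¹
  have hPT : ∀ i, Pm blk i * T = T * Pm blk i := Pm_comm blk T hTblk
  have hPTi : ∀ i, Pm blk i * T⁻¹ = T⁻¹ * Pm blk i := by
    intro i
    calc Pm blk i * T⁻¹ = T⁻¹ * T * (Pm blk i * T⁻¹) := by rw [hTiT, one_mul]
      _ = T⁻¹ * (Pm blk i * T) * T⁻¹ := by rw [hPT]; noncomm_ring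
      _ = T⁻¹ * Pm blk i * (T * T⁻¹) := by noncomm_ring
      _ = T⁻¹ * Pm blk i := by rw [hTTi, mul_one]
  -- structural zero lemmas
  have hPD0 : ∀ i j : Fin q, i ≠ j → Pm blk i * D * Pm blk j = 0 := by
    intro i j hij
    exact PAP blk D i j fun a b ha hb => hDblk a b (by rw [ha, hb]; exact hij)
  have hPLt0 : ∀ i j : Fin q, ¬ i < j → Pm blk i * Lᵀ * Pm blk j = 0 := by
    intro i j hij
    refine PAP blk Lᵀ i j fun a b ha hb => ?_
    show L b a = 0
    exact hLlow b a (by rw [ha, hb]; exact hij)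
  have hPL0 : ∀ i j : Fin q, ¬ j < i → Pm blk i * L * Pm blk j = 0 := by
    intro i j hij
    exact PAP blk L i j fun a b ha hb => hLlow a b (by rw [ha, hb]; exact hij)
  -- step identity
  have hstep : ∀ k (hk : k < q) (X : Matrix (Fin n) (Fin n) ℝ),
      Gn G k * X = X - Pm blk ⟨k, hk⟩ * T * H * X := by
    intro k hk X
    rw [Gn, dif_pos hk, hGeq, sub_mul, one_mul]
  -- (A) untouched blocks
  have hA : ∀ k, k ≤ q → ∀ j : Fin q, k ≤ (j : ℕ) → Pm blk j * M G k = Pm blk j := by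
    intro k
    induction k with
    | zero => intro _ j _; rw [M_zero, mul_one]
    | succ k ih =>
      intro hk j hj
      have hkq : k < q := Nat.lt_of_succ_le hk
      have hne : j ≠ ⟨k, hkq⟩ := by
        intro hh; rw [hh] at hj; simp at hj
      rw [M_succ, hstep k hkq, mul_sub]
      have : Pm blk j * (Pm blk ⟨k, hkq⟩ * T * H * M G k) = 0 := by
        rw [show Pm blk ⟨k, hkq⟩ * T * H * M G k
              = Pm blk ⟨k, hkq⟩ * (T * H * M G k) by noncomm_ring,
          ← mul_assoc, Pm_mul_ne blk hne, zero_mul]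
      rw [this, sub_zero, ih (by omega) j (by omega)]
  -- (B) blocks stable after their update
  have hB : ∀ (j : Fin q) m, (j : ℕ) < m → m ≤ q →
      Pm blk j * M G m = Pm blk j * M G ((j : ℕ) + 1) := by
    intro j m
    induction m with
    | zero => omega
    | succ m ih =>
      intro hjm hm
      rcases Nat.lt_succ_iff_lt_or_eq.mp hjm with hlt | heq
      · have hmq : m < q := Nat.lt_of_succ_le hm
        have hne : j ≠ ⟨m, hmq⟩ := by
          intro hh; rw [hh] at hlt; simp at hlt
        rw [M_succ, hstep m hmq, mul_sub]
        have : Pm blk j * (Pm blk ⟨m, hmq⟩ * T * H * M G m) = 0 := by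
          rw [show Pm blk ⟨m, hmq⟩ * T * H * M G m
                = Pm blk ⟨m, hmq⟩ * (T * H * M G m) by noncomm_ring,
            ← mul_assoc, Pm_mul_ne blk hne, zero_mul]
        rw [this, sub_zero, ih hlt (by omega)]
      · rw [heq]
  -- (C) key identity per block
  have hC : ∀ i : Fin q, Pm blk i * (T⁻¹ * M G q)
      = Pm blk i * (T⁻¹ + L * M G q - D + Lᵀ) := by
    intro i
    set k := (i : ℕ) with hkdef
    have hk : k < q := i.isLt
    have hik : (⟨k, hk⟩ : Fin q) = i := by ext; rfl
    have e1 : Pm blk i * M G (k + 1) = Pm blk i - Pm blk i * T * (H * M G k) := by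
      rw [M_succ, hstep k hk, hik, mul_sub]
      rw [show Pm blk i * (Pm blk i * T * H * M G k)
            = (Pm blk i * Pm blk i) * (T * (H * M G k)) by noncomm_ring,
        Pm_mul_self, hA k (le_of_lt hk) i (le_refl _)]
      noncomm_ring
    have e2 : Pm blk i * M G q = Pm blk i - Pm blk i * T * (H * M G k) := by
      rw [hB i q hk (le_refl q), e1]
    have e4 : T⁻¹ * (Pm blk i * T * (H * M G k)) = Pm blk i * (H * M G k) := by
      rw [hPT, show T⁻¹ * (T * Pm blk i * (H * M G k))
            = (T⁻¹ * T) * (Pm blk i * (H * M G k)) by noncomm_ring, hTiT, one_mul]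
    have e3 : Pm blk i * (T⁻¹ * M G q)
        = Pm blk i * T⁻¹ - Pm blk i * (H * M G k) := by
      calc Pm blk i * (T⁻¹ * M G q) = T⁻¹ * (Pm blk i * M G q) := by
            rw [← mul_assoc, hPTi, mul_assoc]
        _ = T⁻¹ * Pm blk i - Pm blk i * (H * M G k) := by rw [e2, mul_sub, e4]
        _ = Pm blk i * T⁻¹ - Pm blk i * (H * M G k) := by rw [hPTi]
    have hD1 : Pm blk i * D = Pm blk i * D * Pm blk i := by
      calc Pm blk i * D = Pm blk i * D * (∑ j, Pm blk j) := by rw [Pm_sum, mul_one]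
        _ = ∑ j, Pm blk i * D * Pm blk j := Finset.mul_sum _ _ _
        _ = Pm blk i * D * Pm blk i := by
            rw [Finset.sum_eq_single i]
            · intro j _ hji
              exact hPD0 i j (Ne.symm hji)
            · intro hmem; exact absurd (Finset.mem_univ i) hmem
    have s1 : Pm blk i * (D * M G k) = Pm blk i * D := by
      calc Pm blk i * (D * M G k) = (Pm blk i * D * Pm blk i) * M G k := by
            rw [← hD1]; noncomm_ring
        _ = (Pm blk i * D) * (Pm blk i * M G k) := by noncomm_ring
        _ = (Pm blk i * D) * Pm blk i := by rw [hA k (le_of_lt hk) i (le_refl _)]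
        _ = Pm blk i * D := hD1.symm
    have s2 : Pm blk i * (Lᵀ * M G k) = Pm blk i * Lᵀ := by
      calc Pm blk i * (Lᵀ * M G k)
          = (Pm blk i * Lᵀ * (∑ j, Pm blk j)) * M G k := by
            rw [Pm_sum, mul_one]; noncomm_ring
        _ = ∑ j, Pm blk i * Lᵀ * Pm blk j * M G k := by
            rw [Finset.mul_sum, Finset.sum_mul]
        _ = ∑ j, Pm blk i * Lᵀ * Pm blk j := by
            refine Finset.sum_congr rfl fun j _ => ?_
            by_cases hij : i < j
            · rw [mul_assoc, hA k (le_of_lt hk) j (le_of_lt hij)]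
            · rw [hPLt0 i j hij, zero_mul]
        _ = Pm blk i * Lᵀ * (∑ j, Pm blk j) := (Finset.mul_sum _ _ _).symm
        _ = Pm blk i * Lᵀ := by rw [Pm_sum, mul_one]
    have s3 : Pm blk i * (L * M G k) = Pm blk i * (L * M G q) := by
      have expand : ∀ m, Pm blk i * (L * M G m)
          = ∑ j, Pm blk i * L * Pm blk j * M G m := by
        intro m
        calc Pm blk i * (L * M G m)
            = (Pm blk i * L * (∑ j, Pm blk j)) * M G m := by
              rw [Pm_sum, mul_one]; noncomm_ring
          _ = ∑ j, Pm blk i * L * Pm blk j * M G m := by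
              rw [Finset.mul_sum, Finset.sum_mul]
      rw [expand, expand]
      refine Finset.sum_congr rfl fun j _ => ?_
      by_cases hji : j < i
      · calc Pm blk i * L * Pm blk j * M G k
            = Pm blk i * L * (Pm blk j * M G k) := by rw [mul_assoc]
          _ = Pm blk i * L * (Pm blk j * M G q) := by
              rw [hB j k hji (le_of_lt hk), hB j q j.isLt (le_refl q)]
          _ = Pm blk i * L * Pm blk j * M G q := by rw [← mul_assoc]
      · rw [hPL0 i j hji, zero_mul, zero_mul]
    have hHk : Pm blk i * (H * M G k)
        = Pm blk i * D - Pm blk i * (L * M G q) - Pm blk i * Lᵀ := by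
      rw [hdecomp, ← s1, ← s2, ← s3]
      noncomm_ring
    rw [e3, hHk]
    noncomm_ring
  -- sum over blocks
  have hsum : T⁻¹ * M G q = T⁻¹ + L * M G q - D + Lᵀ := by
    have h1 : (∑ j, Pm blk j) * (T⁻¹ * M G q)
        = (∑ j, Pm blk j) * (T⁻¹ + L * M G q - D + Lᵀ) := by
      rw [Finset.sum_mul, Finset.sum_mul]
      exact Finset.sum_congr rfl fun i _ => hC i
    rwa [Pm_sum, one_mul, one_mul] at h1
  have hkey : (T⁻¹ - L) * M G q = T⁻¹ - D + Lᵀ := by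
    rw [sub_mul, hsum]; abel
  -- invertibility of T⁻¹ - L
  have hNil : IsNilpotent (T * L) := ⟨q, TL_nilpotent blk T L hTblk hLlow⟩
  have hU1 : IsUnit (1 - T * L) := hNil.isUnit_one_sub
  have hfact : T⁻¹ - L = T⁻¹ * (1 - T * L) := by
    rw [mul_sub, mul_one, ← mul_assoc, hTiT, one_mul]
  have hUT : IsUnit (T⁻¹ : Matrix (Fin n) (Fin n) ℝ) := by
    rw [Matrix.isUnit_iff_isUnit_det, Matrix.det_nonsing_inv]
    exact hTdet.ringInverse
  have hUTL : IsUnit (T⁻¹ - L) := by rw [hfact]; exact hUT.mul hU1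
  have hdet2 : IsUnit (T⁻¹ - L).det := (Matrix.isUnit_iff_isUnit_det _).mp hUTL
  rw [M_top, ← hkey, ← Matrix.mul_assoc, Matrix.nonsing_inv_mul _ hdet2, one_mul]
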